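/- Let P be a positive system of roots of L, let N := Σ_{α∈P} L_α, and let H_gen := {h ∈ H : α(h) ≠ 0 for every root α}. Then the map N × H_gen → L sending (u, h) to exp(ad u)(h) is injective, and its image is exactly the set {h + n : h ∈ H_gen, n ∈ N}. (This is the Lie-algebra, points-level form of the T-equivariant isomorphism a : U × 𝔱_gen → 𝔟_gen proved in the paper's lemma comparing Hamiltonian reduction with restriction over the generic locus of the Cartan.) -/

import Mathlib

set_option linter.unusedSectionVars false

open LieModule LieAlgebra

/-- The exponential `Σ_{k ≥ 0} (1/k!) • f ^ k` of a nilpotent endomorphism of a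
finite-dimensional space.  A nilpotent endomorphism `f` of a space of dimension `d`
satisfies `f ^ d = 0`, so truncating at `k ≤ d` computes the full (finite) sum. -/
noncomputable def expNilpotent {K L : Type*} [Field K] [AddCommGroup L] [Module K L]
    (f : Module.End K L) : Module.End K L :=
  ∑ k ∈ Finset.range (Module.finrank K L + 1), (k.factorial : K)⁻¹ • f ^ k

namespace ExpAdAux

local notation "expN" => expNilpotent


lemma list_sum_eq {X : Type*} [AddCommMonoid X] (l : List X) :
    l.sum = ∑ i : Fin l.length, l.get i := by
  induction l with
  | nil => simp
  | cons a t ih =>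
    rw [List.sum_cons, ih]
    exact (Fin.sum_univ_succ (fun i : Fin (t.length + 1) => (a :: t).get i)).symm

variable {K : Type*} [Field K] [CharZero K]
  {L : Type*} [LieRing L] [LieAlgebra K L] [Module.Finite K L]
  {H : LieSubalgebra K L} [H.IsCartanSubalgebra]
  {P : Set (H → K)}

section Sums

variable (hsum : ∀ (m : ℕ) (c : Fin (m + 1) → (H → K)), (∀ i, c i ∈ P) → ∑ i, c i ≠ 0)
include hsum

lemma hsum_list : ∀ c : List (H → K), c ≠ [] → (∀ x ∈ c, x ∈ P) → c.sum ≠ 0 := by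
  rintro (_ | ⟨a, t⟩) hne hc
  · exact absurd rfl hne
  · rw [list_sum_eq]
    exact hsum t.length (fun i => (a :: t).get i) (fun i => hc _ (List.get_mem _ _))

lemma hsum_two {α β : H → K} (hα : α ∈ P) (hβ : β ∈ P) : α + β ≠ 0 := by
  have := hsum_list hsum [α, β] (by simp) (by simp [hα, hβ])
  simpa using this

end Sums

variable (H P) in
/-- Roots expressible as an iterated sum `α₁ + (α₂ + ⋯)` of `m+1` positive roots via roots. -/
def Aset : ℕ → Set (H → K)
  | 0 => {γ | γ ∈ P ∧ rootSpace H γ ≠ ⊥}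
  | (m + 1) => {γ | rootSpace H γ ≠ ⊥ ∧ ∃ α ∈ P, ∃ β ∈ Aset m, γ = α + β}

section AsetLemmas

variable
  (hadd : ∀ α ∈ P, ∀ β ∈ P, α + β ≠ 0 → rootSpace H (α + β) ≠ ⊥ → α + β ∈ P)
  (hsum : ∀ (m : ℕ) (c : Fin (m + 1) → (H → K)), (∀ i, c i ∈ P) → ∑ i, c i ≠ 0)
include hadd hsum

lemma Aset_subset_P : ∀ m, Aset H P m ⊆ P := by
  intro m
  induction m with
  | zero => exact fun γ hγ => hγ.1
  | succ m ih =>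
    rintro γ ⟨hγ, α, hα, β, hβ, rfl⟩
    exact hadd α hα β (ih hβ) (hsum_two hsum hα (ih hβ)) hγ

lemma Aset_props (hP : ∀ α ∈ P, α ≠ 0 ∧ rootSpace H α ≠ ⊥) {m : ℕ} {γ : H → K}
    (hγ : γ ∈ Aset H P m) : γ ≠ 0 ∧ rootSpace H γ ≠ ⊥ ∧ γ ∈ P := by
  have hγP := Aset_subset_P hadd hsum m hγ
  refine ⟨(hP γ hγP).1, ?_, hγP⟩
  cases m with
  | zero => exact hγ.2
  | succ m => exact hγ.1

end AsetLemmas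

variable (P) in
/-- `x` exceeds `y` by a nonempty sum of positive roots. -/
def Rel (x y : H → K) : Prop :=
  ∃ c : List (H → K), c ≠ [] ∧ (∀ z ∈ c, z ∈ P) ∧ x = y + c.sum

section Chain

variable (hP : ∀ α ∈ P, α ≠ 0 ∧ rootSpace H α ≠ ⊥)
  (hadd : ∀ α ∈ P, ∀ β ∈ P, α + β ≠ 0 → rootSpace H (α + β) ≠ ⊥ → α + β ∈ P)
  (hsum : ∀ (m : ℕ) (c : Fin (m + 1) → (H → K)), (∀ i, c i ∈ P) → ∑ i, c i ≠ 0)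
include hP hadd hsum

lemma Aset_chain : ∀ m, ∀ γ ∈ Aset H P m, ∃ l : List (H → K),
    l.length = m + 1 ∧ (∀ x ∈ l, rootSpace H x ≠ ⊥) ∧ l.Pairwise (Rel P) ∧
    l.head? = some γ := by
  intro m
  induction m with
  | zero =>
    intro γ hγ
    exact ⟨[γ], rfl, by simpa using hγ.2, by simp, rfl⟩
  | succ m ih =>
    rintro γ ⟨hγ, α, hα, β, hβ, rfl⟩
    obtain ⟨l, hlen, hmem, hpair, hhead⟩ := ih β hβ
    obtain ⟨b, t, rfl⟩ : ∃ b t, l = b :: t := by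
      cases l with
      | nil => simp at hhead
      | cons b t => exact ⟨b, t, rfl⟩
    have hb : b = β := by simpa using hhead
    subst hb
    refine ⟨(α + b) :: b :: t, by simpa using hlen, ?_, ?_, rfl⟩
    · intro x hx
      rcases List.mem_cons.mp hx with rfl | hx
      · exact hγ
      · exact hmem x hx
    · refine List.Pairwise.cons ?_ hpair
      intro y hy
      rcases List.mem_cons.mp hy with hy | hy
      · subst hy
        exact ⟨[α], by simp, by simp [hα], by rw [List.sum_cons]; simp [add_comm]⟩
      · obtain ⟨c, hc0, hcP, hce⟩ := List.rel_of_pairwise_cons hpair hy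
        refine ⟨α :: c, by simp, ?_, by rw [List.sum_cons, hce]; abel⟩
        intro z hz
        rcases List.mem_cons.mp hz with hz | hz
        · subst hz; exact hα
        · exact hcP z hz

lemma Aset_card_le {m : ℕ} {γ : H → K} (hγ : γ ∈ Aset H P m) :
    m + 1 ≤ (LieModule.finite_genWeightSpace_ne_bot K H L).toFinset.card := by
  classical
  obtain ⟨l, hlen, hmem, hpair, -⟩ := Aset_chain hP hadd hsum m γ hγ
  have hnd : l.Nodup := by
    refine hpair.imp ?_
    rintro a b ⟨c, hc0, hcP, rfl⟩ h
    exact hsum_list hsum c hc0 hcP (by simpa using h.symm)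
  calc m + 1 = l.toFinset.card := by rw [List.toFinset_card_of_nodup hnd, hlen]
    _ ≤ _ := by
      apply Finset.card_le_card
      intro x hx
      rw [Set.Finite.mem_toFinset]
      exact hmem x (List.mem_toFinset.mp hx)

lemma Aset_empty {j : ℕ}
    (hj : (LieModule.finite_genWeightSpace_ne_bot K H L).toFinset.card ≤ j) :
    Aset H P j = ∅ := by
  ext γ
  simp only [Set.mem_empty_iff_false, iff_false]
  intro hγ
  exact absurd (Aset_card_le hP hadd hsum hγ) (by omega)

end Chain

variable (H P) in
/-- The height filtration of `N`. -/
noncomputable def Fmod (m : ℕ) : Submodule K L :=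
  ⨆ j : ℕ, ⨆ _ : m ≤ j, ⨆ γ : (H → K), ⨆ _ : γ ∈ Aset H P j, (rootSpace H γ : Submodule K L)

lemma rootSpace_le_Fmod {m j : ℕ} (hj : m ≤ j) {γ : H → K} (hγ : γ ∈ Aset H P j) :
    (rootSpace H γ : Submodule K L) ≤ Fmod H P m :=
  le_iSup_of_le j <| le_iSup_of_le hj <| le_iSup_of_le γ <| le_iSup_of_le hγ le_rfl

lemma Fmod_le {m : ℕ} {W : Submodule K L}
    (h : ∀ j, m ≤ j → ∀ γ ∈ Aset H P j, (rootSpace H γ : Submodule K L) ≤ W) :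
    Fmod H P m ≤ W :=
  iSup_le fun j => iSup_le fun hj => iSup_le fun γ => iSup_le fun hγ => h j hj γ hγ

lemma Fmod_antitone {m m' : ℕ} (h : m ≤ m') : Fmod H P m' ≤ Fmod H P m :=
  Fmod_le fun j hj γ hγ => rootSpace_le_Fmod (h.trans hj) hγ

lemma Fmod_eq_bot
    (hP : ∀ α ∈ P, α ≠ 0 ∧ rootSpace H α ≠ ⊥)
    (hadd : ∀ α ∈ P, ∀ β ∈ P, α + β ≠ 0 → rootSpace H (α + β) ≠ ⊥ → α + β ∈ P)
    (hsum : ∀ (m : ℕ) (c : Fin (m + 1) → (H → K)), (∀ i, c i ∈ P) → ∑ i, c i ≠ 0) :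
    Fmod H P (LieModule.finite_genWeightSpace_ne_bot K H L).toFinset.card = ⊥ := by
  refine le_bot_iff.mp (Fmod_le fun j hj γ hγ => ?_)
  rw [Aset_empty hP hadd hsum hj] at hγ
  exact absurd hγ (Set.notMem_empty γ)

section FmodLemmas

variable {N : LieSubmodule K H L}
  (hP : ∀ α ∈ P, α ≠ 0 ∧ rootSpace H α ≠ ⊥)
  (hadd : ∀ α ∈ P, ∀ β ∈ P, α + β ≠ 0 → rootSpace H (α + β) ≠ ⊥ → α + β ∈ P)
  (hsum : ∀ (m : ℕ) (c : Fin (m + 1) → (H → K)), (∀ i, c i ∈ P) → ∑ i, c i ≠ 0)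
  (hN : N = ⨆ α ∈ P, rootSpace H α)

lemma Fmod_le_N (hadd : ∀ α ∈ P, ∀ β ∈ P, α + β ≠ 0 → rootSpace H (α + β) ≠ ⊥ → α + β ∈ P)
    (hsum : ∀ (m : ℕ) (c : Fin (m + 1) → (H → K)), (∀ i, c i ∈ P) → ∑ i, c i ≠ 0)
    (hN : N = ⨆ α ∈ P, rootSpace H α) (m : ℕ) :
    Fmod H P m ≤ (N : Submodule K L) := by
  refine Fmod_le fun j hj γ hγ => ?_
  have hγP : γ ∈ P := Aset_subset_P hadd hsum j hγ
  have : rootSpace H γ ≤ N := hN ▸ le_iSup_of_le γ (le_iSup_of_le hγP le_rfl)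
  exact (LieSubmodule.toSubmodule_le_toSubmodule _ _).mpr this

lemma N_le_Fmod_zero (hN : N = ⨆ α ∈ P, rootSpace H α) :
    (N : Submodule K L) ≤ Fmod H P 0 := by
  rw [hN]
  rw [LieSubmodule.iSup_toSubmodule]
  refine iSup_le fun α => ?_
  rw [LieSubmodule.iSup_toSubmodule]
  refine iSup_le fun hα => ?_
  by_cases hbot : rootSpace H α = ⊥
  · rw [hbot]; simp
  · exact rootSpace_le_Fmod le_rfl ⟨hα, hbot⟩

end FmodLemmas

lemma lie_H_Fmod {m : ℕ} (h : H) {x : L} (hx : x ∈ Fmod H P m) :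
    ⁅(h : L), x⁆ ∈ Fmod H P m := by
  have : Fmod H P m ≤ Submodule.comap (LieAlgebra.ad K L (h : L)) (Fmod H P m) := by
    refine Fmod_le fun j hj γ hγ => ?_
    intro y hy
    have : ⁅h, y⁆ ∈ rootSpace H γ := (rootSpace H γ).lie_mem hy
    rw [LieSubalgebra.coe_bracket_of_module] at this
    exact rootSpace_le_Fmod hj hγ this
  simpa [LieAlgebra.ad_apply] using this hx

lemma lie_N_Fmod {N : LieSubmodule K H L}
    (hsum : ∀ (m : ℕ) (c : Fin (m + 1) → (H → K)), (∀ i, c i ∈ P) → ∑ i, c i ≠ 0)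
    (hN : N = ⨆ α ∈ P, rootSpace H α)
    {m : ℕ} {u x : L} (hu : u ∈ N) (hx : x ∈ Fmod H P m) :
    ⁅u, x⁆ ∈ Fmod H P (m + 1) := by
  -- first: the statement for `u` in a root space
  have key : ∀ α ∈ P, ∀ u' ∈ rootSpace H α, ∀ y ∈ Fmod H P m, ⁅u', y⁆ ∈ Fmod H P (m + 1) := by
    intro α hα u' hu' y hy
    have : Fmod H P m ≤ Submodule.comap (LieAlgebra.ad K L u') (Fmod H P (m + 1)) := by
      refine Fmod_le fun j hj γ hγ => ?_
      intro z hz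
      have hlie : ⁅u', z⁆ ∈ rootSpace H (α + γ) :=
        LieAlgebra.lie_mem_genWeightSpace_of_mem_genWeightSpace hu' hz
      simp only [Submodule.mem_comap, LieAlgebra.ad_apply]
      by_cases hbot : rootSpace H (α + γ) = ⊥
      · rw [hbot] at hlie
        simp only [LieSubmodule.mem_bot] at hlie
        rw [hlie]; exact zero_mem _
      · exact rootSpace_le_Fmod (Nat.succ_le_succ hj) ⟨hbot, α, hα, γ, hγ, rfl⟩ hlie
    simpa [LieAlgebra.ad_apply] using this hy
  -- now extend to all of `N` by linearity
  let S : Submodule K L :=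
    { carrier := {u' : L | ∀ y ∈ Fmod H P m, ⁅u', y⁆ ∈ Fmod H P (m + 1)}
      add_mem' := fun ha hb y hy => by
        rw [add_lie]; exact add_mem (ha y hy) (hb y hy)
      zero_mem' := fun y hy => by rw [zero_lie]; exact zero_mem _
      smul_mem' := fun c a ha y hy => by
        rw [smul_lie]; exact Submodule.smul_mem _ c (ha y hy) }
  have hNS : (N : Submodule K L) ≤ S := by
    rw [hN, LieSubmodule.iSup_toSubmodule]
    refine iSup_le fun α => ?_
    rw [LieSubmodule.iSup_toSubmodule]
    refine iSup_le fun hα => ?_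
    exact fun u' hu' => key α hα u' hu'
  exact hNS ((LieSubmodule.mem_toSubmodule N).mpr hu) x hx

section Adh

variable {h : H} (hgen : ∀ α : H → K, α ≠ 0 → rootSpace H α ≠ ⊥ → α h ≠ 0)

lemma adh_surj_rootSpace {γ : H → K} (hγh : γ h ≠ 0) {x : L} (hx : x ∈ rootSpace H γ) :
    ∃ y ∈ rootSpace H γ, ⁅(h : L), y⁆ = x := by
  set f : Module.End K L := LieModule.toEnd K H L h with hf
  set n : Module.End K L := f - γ h • 1 with hn
  have hmaps : ∀ z ∈ rootSpace H γ, n z ∈ rootSpace H γ := by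
    intro z hz
    have h1 : f z ∈ rootSpace H γ := by
      have : ⁅h, z⁆ ∈ rootSpace H γ := (rootSpace H γ).lie_mem hz
      simpa [hf, LieModule.toEnd_apply_apply] using this
    have h2 : (γ h • 1 : Module.End K L) z ∈ rootSpace H γ :=
      Submodule.smul_mem _ _ hz
    simpa [hn, LinearMap.sub_apply] using sub_mem h1 h2
  obtain ⟨k, hk⟩ : ∃ k : ℕ, (n ^ k) x = 0 := by
    have := (LieModule.mem_genWeightSpace L γ x).mp hx h
    simpa [hn, hf] using this
  have main : ∀ k : ℕ, ∀ z ∈ rootSpace H γ, (n ^ k) z = 0 →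
      ∃ y ∈ rootSpace H γ, ⁅(h : L), y⁆ = z := by
    intro k
    induction k with
    | zero =>
      intro z hz hkz
      simp only [pow_zero, Module.End.one_apply] at hkz
      exact ⟨0, zero_mem _, by rw [lie_zero, hkz]⟩
    | succ k ih =>
      intro z hz hkz
      have hz1 : n z ∈ rootSpace H γ := hmaps z hz
      have hz1' : (γ h)⁻¹ • n z ∈ rootSpace H γ := Submodule.smul_mem _ _ hz1
      have hk1 : (n ^ k) ((γ h)⁻¹ • n z) = 0 := by
        rw [map_smul]
        have : (n ^ k) (n z) = (n ^ (k + 1)) z := by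
          rw [pow_succ n k, Module.End.mul_apply]
        rw [this, hkz, smul_zero]
      obtain ⟨y1, hy1, hy1e⟩ := ih ((γ h)⁻¹ • n z) hz1' hk1
      refine ⟨(γ h)⁻¹ • z - y1, sub_mem (Submodule.smul_mem _ _ hz) hy1, ?_⟩
      have hfz : ⁅(h : L), z⁆ = γ h • z + n z := by
        have hfz' : f z = ⁅(h : L), z⁆ := by
          simp [hf, LieModule.toEnd_apply_apply, LieSubalgebra.coe_bracket_of_module]
        rw [← hfz', hn]
        simp [LinearMap.sub_apply]
      rw [lie_sub, lie_smul, hfz, hy1e]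
      rw [smul_add, smul_smul, inv_mul_cancel₀ hγh, one_smul]
      abel
  exact main k x hx hk

include hgen

lemma adh_surj_Fmod
    (hP : ∀ α ∈ P, α ≠ 0 ∧ rootSpace H α ≠ ⊥)
    (hadd : ∀ α ∈ P, ∀ β ∈ P, α + β ≠ 0 → rootSpace H (α + β) ≠ ⊥ → α + β ∈ P)
    (hsum : ∀ (m : ℕ) (c : Fin (m + 1) → (H → K)), (∀ i, c i ∈ P) → ∑ i, c i ≠ 0)
    {m : ℕ} {x : L} (hx : x ∈ Fmod H P m) :
    ∃ y ∈ Fmod H P m, ⁅(h : L), y⁆ = x := by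
  have hmap : Fmod H P m ≤ Submodule.map (LieAlgebra.ad K L (h : L)) (Fmod H P m) := by
    refine Fmod_le fun j hj γ hγ => ?_
    intro z hz
    obtain ⟨hγ0, hγbot, -⟩ := Aset_props hadd hsum hP hγ
    obtain ⟨y, hy, hye⟩ := adh_surj_rootSpace (hgen γ hγ0 hγbot) hz
    exact ⟨y, rootSpace_le_Fmod hj hγ hy, by rw [LieAlgebra.ad_apply, hye]⟩
  obtain ⟨y, hy, hye⟩ := Submodule.mem_map.mp (hmap hx)
  exact ⟨y, hy, by rw [← LieAlgebra.ad_apply (R := K), hye]⟩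

lemma adh_step
    (hP : ∀ α ∈ P, α ≠ 0 ∧ rootSpace H α ≠ ⊥)
    (hadd : ∀ α ∈ P, ∀ β ∈ P, α + β ≠ 0 → rootSpace H (α + β) ≠ ⊥ → α + β ∈ P)
    (hsum : ∀ (m : ℕ) (c : Fin (m + 1) → (H → K)), (∀ i, c i ∈ P) → ∑ i, c i ≠ 0)
    {m : ℕ} {x : L} (hx : x ∈ Fmod H P m) (hlie : ⁅(h : L), x⁆ ∈ Fmod H P (m + 1)) :
    x ∈ Fmod H P (m + 1) := by
  -- restrict ad h to an endomorphism of Fmod m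
  set e : Fmod H P m →ₗ[K] Fmod H P m :=
    (LieAlgebra.ad K L (h : L)).restrict (fun z hz => by
      rw [LieAlgebra.ad_apply]; exact lie_H_Fmod h hz) with he
  have hesurj : Function.Surjective e := by
    rintro ⟨z, hz⟩
    obtain ⟨y, hy, hye⟩ := adh_surj_Fmod hgen hP hadd hsum hz
    exact ⟨⟨y, hy⟩, Subtype.ext (by simpa [he, LinearMap.restrict_apply,
      LieAlgebra.ad_apply] using hye)⟩
  have heinj : Function.Injective e :=
    (LinearMap.injective_iff_surjective).mpr hesurj
  obtain ⟨w, hw, hwe⟩ := adh_surj_Fmod hgen hP hadd hsum hlie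
  have hwm : w ∈ Fmod H P m := Fmod_antitone (Nat.le_succ m) hw
  have : e ⟨x, hx⟩ = e ⟨w, hwm⟩ := by
    apply Subtype.ext
    simp only [he, LinearMap.restrict_apply, LieAlgebra.ad_apply]
    exact hwe.symm ▸ rfl
  have := heinj this
  have hxw : x = w := congrArg Subtype.val this
  rw [hxw]; exact hw

end Adh

section Exp

variable {N : LieSubmodule K H L}
  (hadd : ∀ α ∈ P, ∀ β ∈ P, α + β ≠ 0 → rootSpace H (α + β) ≠ ⊥ → α + β ∈ P)
  (hsum : ∀ (m : ℕ) (c : Fin (m + 1) → (H → K)), (∀ i, c i ∈ P) → ∑ i, c i ≠ 0)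
  (hN : N = ⨆ α ∈ P, rootSpace H α)
include hadd hsum hN

lemma pow_ad_mem_N {u : L} (hu : u ∈ N) (h : H) :
    ∀ k : ℕ, ((LieAlgebra.ad K L u) ^ (k + 1)) (h : L) ∈ N := by
  intro k
  induction k with
  | zero =>
    simp only [zero_add, pow_one, LieAlgebra.ad_apply]
    rw [← lie_skew]
    refine neg_mem ?_
    have : ⁅h, u⁆ ∈ N := N.lie_mem hu
    rwa [LieSubalgebra.coe_bracket_of_module] at this
  | succ k ih =>
    rw [pow_succ', Module.End.mul_apply, LieAlgebra.ad_apply]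
    have hX : ((LieAlgebra.ad K L u) ^ (k + 1)) (h : L) ∈ Fmod H P 0 :=
      N_le_Fmod_zero hN ((LieSubmodule.mem_toSubmodule N).mpr ih)
    have := lie_N_Fmod hsum hN hu hX
    exact (LieSubmodule.mem_toSubmodule N).mp (Fmod_le_N hadd hsum hN 1 this)

end Exp

lemma expN_apply {K L : Type*} [Field K] [AddCommGroup L] [Module K L]
    (f : Module.End K L) (x : L) :
    expN f x = ∑ k ∈ Finset.range (Module.finrank K L + 1), (k.factorial : K)⁻¹ • (f ^ k) x := by
  simp [expNilpotent, LinearMap.sum_apply, LinearMap.smul_apply]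

lemma expN_zero_apply (x : L) : expN (LieAlgebra.ad K L 0) x = x := by
  rw [show LieAlgebra.ad K L 0 = 0 from (LieAlgebra.ad K L).map_zero, expN_apply]
  rw [Finset.sum_eq_single 0]
  · simp
  · intro k _ hk
    rw [zero_pow hk]
    simp
  · intro habs
    exact absurd (Finset.mem_range.mpr (Nat.succ_pos _)) habs

section Exp2

variable {N : LieSubmodule K H L}
  (hadd : ∀ α ∈ P, ∀ β ∈ P, α + β ≠ 0 → rootSpace H (α + β) ≠ ⊥ → α + β ∈ P)
  (hsum : ∀ (m : ℕ) (c : Fin (m + 1) → (H → K)), (∀ i, c i ∈ P) → ∑ i, c i ≠ 0)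
  (hN : N = ⨆ α ∈ P, rootSpace H α)
include hadd hsum hN

lemma expN_eq_add {u : L} (hu : u ∈ N) (h : H) :
    ∃ n ∈ N, expN (LieAlgebra.ad K L u) (h : L) = (h : L) + n := by
  rw [expN_apply, Finset.sum_range_succ']
  refine ⟨∑ k ∈ Finset.range (Module.finrank K L),
    ((k + 1).factorial : K)⁻¹ • ((LieAlgebra.ad K L u) ^ (k + 1)) (h : L), ?_, ?_⟩
  · exact Submodule.sum_mem _ fun k _ =>
      Submodule.smul_mem _ _ (pow_ad_mem_N hadd hsum hN hu h k)
  · simp [add_comm]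

lemma expN_diff {u u' : L} (hu : u ∈ N) (hu' : u' ∈ N) {m : ℕ}
    (hm : u - u' ∈ Fmod H P m) (h : H) :
    expN (LieAlgebra.ad K L u) (h : L) - expN (LieAlgebra.ad K L u') (h : L)
      - ⁅u - u', (h : L)⁆ ∈ Fmod H P (m + 1) := by
  set D : ℕ → L := fun k =>
    ((LieAlgebra.ad K L u) ^ k) (h : L) - ((LieAlgebra.ad K L u') ^ k) (h : L) with hD
  have hD1 : D 1 = ⁅u - u', (h : L)⁆ := by
    simp only [hD, pow_one, LieAlgebra.ad_apply, sub_lie]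
  have hDsucc : ∀ k : ℕ, D (k + 2) =
      ⁅u - u', ((LieAlgebra.ad K L u) ^ (k + 1)) (h : L)⁆ + ⁅u', D (k + 1)⁆ := by
    intro k
    have e1 : ((LieAlgebra.ad K L u) ^ (k + 2)) (h : L)
        = ⁅u, ((LieAlgebra.ad K L u) ^ (k + 1)) (h : L)⁆ := by
      rw [pow_succ', Module.End.mul_apply, LieAlgebra.ad_apply]
    have e2 : ((LieAlgebra.ad K L u') ^ (k + 2)) (h : L)
        = ⁅u', ((LieAlgebra.ad K L u') ^ (k + 1)) (h : L)⁆ := by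
      rw [pow_succ', Module.End.mul_apply, LieAlgebra.ad_apply]
    simp only [hD, e1, e2, lie_sub, sub_lie]
    abel
  have hc1 : ∀ k : ℕ, D (k + 1) ∈ Fmod H P m := by
    intro k
    induction k with
    | zero =>
      rw [show (0 : ℕ) + 1 = 1 from rfl, hD1, ← lie_skew]
      exact neg_mem (lie_H_Fmod h hm)
    | succ k ih =>
      rw [show k + 1 + 1 = k + 2 from rfl, hDsucc k]
      refine add_mem (Fmod_antitone (Nat.le_succ m) ?_) (Fmod_antitone (Nat.le_succ m) ?_)
      · rw [← lie_skew]
        refine neg_mem ?_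
        exact lie_N_Fmod hsum hN (pow_ad_mem_N hadd hsum hN hu h k) hm
      · exact lie_N_Fmod hsum hN hu' ih
  have hc2 : ∀ k : ℕ, D (k + 2) ∈ Fmod H P (m + 1) := by
    intro k
    rw [hDsucc k]
    refine add_mem ?_ (lie_N_Fmod hsum hN hu' (hc1 k))
    rw [← lie_skew]
    exact neg_mem (lie_N_Fmod hsum hN (pow_ad_mem_N hadd hsum hN hu h k) hm)
  by_cases hL : Subsingleton L
  · rw [Subsingleton.elim (expN (LieAlgebra.ad K L u) (h : L)
      - expN (LieAlgebra.ad K L u') (h : L) - ⁅u - u', (h : L)⁆) 0]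
    exact zero_mem _
  · have : Nontrivial L := not_subsingleton_iff_nontrivial.mp hL
    obtain ⟨e, he⟩ : ∃ e, Module.finrank K L = e + 1 :=
      Nat.exists_eq_succ_of_ne_zero (Nat.pos_iff_ne_zero.mp Module.finrank_pos)
    have hsum_eq : expN (LieAlgebra.ad K L u) (h : L) - expN (LieAlgebra.ad K L u') (h : L)
        = ∑ k ∈ Finset.range (e + 2), (k.factorial : K)⁻¹ • D k := by
      rw [expN_apply, expN_apply, he, ← Finset.sum_sub_distrib]
      exact Finset.sum_congr rfl fun k _ => (smul_sub _ _ _).symm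
    have hpeel : ∑ k ∈ Finset.range (e + 2), (k.factorial : K)⁻¹ • D k
        = (∑ k ∈ Finset.range e, ((k + 2).factorial : K)⁻¹ • D (k + 2)) + ⁅u - u', (h : L)⁆ := by
      rw [Finset.sum_range_succ' (fun k => (k.factorial : K)⁻¹ • D k) (e + 1)]
      rw [Finset.sum_range_succ' (fun k => ((k + 1).factorial : K)⁻¹ • D (k + 1)) e]
      have hD0 : D 0 = 0 := by simp [hD]
      rw [hD0, hD1]
      simp [Nat.factorial]
    rw [hsum_eq, hpeel, add_sub_cancel_right]
    exact Submodule.sum_mem _ fun k _ => Submodule.smul_mem _ _ (hc2 k)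

end Exp2

end ExpAdAux

/-- **The isomorphism `U × 𝔱_gen ≅ 𝔟_gen` at the level of points.**
`K` algebraically closed of characteristic zero, `L` a finite-dimensional Lie algebra over `K`
with nondegenerate Killing form, `H` a Cartan subalgebra, `P` a positive system of roots,
`N := Σ_{α ∈ P} L_α` and `H_gen := {h ∈ H : α h ≠ 0 for every root α}`.  The map
`N × H_gen → L`, `(u, h) ↦ exp (ad u) h`, is injective with image exactly
`{h + n : h ∈ H_gen, n ∈ N}`. -/
theorem exp_ad_injective_and_image_generic_borel
    {K : Type*} [Field K] [IsAlgClosed K] [CharZero K]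
    {L : Type*} [LieRing L] [LieAlgebra K L] [Module.Finite K L]
    [LieAlgebra.IsKilling K L]
    (H : LieSubalgebra K L) [H.IsCartanSubalgebra]
    (P : Set (H → K))
    (hP : ∀ α ∈ P, α ≠ 0 ∧ rootSpace H α ≠ ⊥)
    (hxor : ∀ α : H → K, α ≠ 0 → rootSpace H α ≠ ⊥ → Xor' (α ∈ P) (-α ∈ P))
    (hadd : ∀ α ∈ P, ∀ β ∈ P, α + β ≠ 0 → rootSpace H (α + β) ≠ ⊥ → α + β ∈ P)
    (hsum : ∀ (m : ℕ) (c : Fin (m + 1) → (H → K)),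
      (∀ i, c i ∈ P) → ∑ i, c i ≠ 0)
    (N : LieSubmodule K H L) (hN : N = ⨆ α ∈ P, rootSpace H α)
    (Hgen : Set H) (hHgen : Hgen = {h : H | ∀ α : H → K, α ≠ 0 → rootSpace H α ≠ ⊥ → α h ≠ 0}) :
    (∀ u ∈ N, ∀ u' ∈ N, ∀ h ∈ Hgen, ∀ h' ∈ Hgen,
        expNilpotent (LieAlgebra.ad K L u) (h : L) = expNilpotent (LieAlgebra.ad K L u') (h' : L) →
          u = u' ∧ h = h') ∧
      (∀ x : L,
        (∃ u ∈ N, ∃ h ∈ Hgen, expNilpotent (LieAlgebra.ad K L u) (h : L) = x) ↔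
          (∃ h ∈ Hgen, ∃ n ∈ N, x = (h : L) + n)) := by
  classical
  subst hHgen
  set Mb := (LieModule.finite_genWeightSpace_ne_bot K (↥H) L).toFinset.card with hMb
  have hFbot : ExpAdAux.Fmod H P Mb = ⊥ := ExpAdAux.Fmod_eq_bot hP hadd hsum
  constructor
  · intro u hu u' hu' h hh h' hh' heq
    obtain ⟨n1, hn1, e1⟩ := ExpAdAux.expN_eq_add hadd hsum hN hu h
    obtain ⟨n2, hn2, e2⟩ := ExpAdAux.expN_eq_add hadd hsum hN hu' h'
    have heq' : (h : L) + n1 = (h' : L) + n2 := by rw [← e1, ← e2]; exact heq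
    have h3 : (h : L) - (h' : L) = n2 - n1 := by
      rw [sub_eq_sub_iff_add_eq_add, heq', add_comm]
    have hdiffN : (h : L) - (h' : L) ∈ N := h3 ▸ N.sub_mem hn2 hn1
    have hmem0 : (h : L) - (h' : L) ∈ rootSpace H 0 := by
      rw [LieAlgebra.rootSpace_zero_eq]
      exact (LieSubalgebra.mem_toLieSubmodule _).mpr (H.sub_mem h.2 h'.2)
    have hle : N ≤ ⨆ α, ⨆ _ : α ≠ (0 : ↥H → K), rootSpace H α := by
      rw [hN]
      exact iSup₂_le fun α hα => le_iSup₂_of_le α ((hP α hα).1) le_rfl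
    have hdisj := (LieModule.iSupIndep_genWeightSpace K (↥H) L) 0
    have h0 : (h : L) - (h' : L) ∈ (⊥ : LieSubmodule K (↥H) L) :=
      hdisj.le_bot ((LieSubmodule.mem_inf _ _ _).mpr ⟨hmem0, hle hdiffN⟩)
    have hhh : h = h' := by
      apply Subtype.ext
      have : (h : L) - (h' : L) = 0 := by simpa using h0
      exact sub_eq_zero.mp this
    subst hhh
    refine ⟨?_, rfl⟩
    have hgen : ∀ α : ↥H → K, α ≠ 0 → rootSpace H α ≠ ⊥ → α h ≠ 0 := hh
    have claim : ∀ j : ℕ, u - u' ∈ ExpAdAux.Fmod H P j := by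
      intro j
      induction j with
      | zero =>
        exact ExpAdAux.N_le_Fmod_zero hN
          ((LieSubmodule.mem_toSubmodule N).mpr (N.sub_mem hu hu'))
      | succ j ih =>
        have hd := ExpAdAux.expN_diff hadd hsum hN hu hu' ih h
        rw [heq, sub_self, zero_sub] at hd
        have hlie : ⁅(h : L), u - u'⁆ ∈ ExpAdAux.Fmod H P (j + 1) := by
          rw [← lie_skew]
          exact hd
        exact ExpAdAux.adh_step hgen hP hadd hsum ih hlie
    have hfin := claim Mb
    rw [hFbot] at hfin
    exact sub_eq_zero.mp ((Submodule.mem_bot K).mp hfin)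
  · intro x
    constructor
    · rintro ⟨u, hu, h, hh, rfl⟩
      obtain ⟨n, hn, e⟩ := ExpAdAux.expN_eq_add hadd hsum hN hu h
      exact ⟨h, hh, n, hn, e⟩
    · rintro ⟨h, hh, n, hn, rfl⟩
      have hgen : ∀ α : ↥H → K, α ≠ 0 → rootSpace H α ≠ ⊥ → α h ≠ 0 := hh
      have claim : ∀ j : ℕ, ∃ u ∈ N,
          ((h : L) + n) - expNilpotent (LieAlgebra.ad K L u) (h : L) ∈ ExpAdAux.Fmod H P j := by
        intro j
        induction j with
        | zero =>
          refine ⟨0, N.zero_mem, ?_⟩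
          rw [ExpAdAux.expN_zero_apply, add_sub_cancel_left]
          exact ExpAdAux.N_le_Fmod_zero hN ((LieSubmodule.mem_toSubmodule N).mpr hn)
        | succ j ih =>
          obtain ⟨u, hu, hδ⟩ := ih
          obtain ⟨v, hv, hve⟩ := ExpAdAux.adh_surj_Fmod hgen hP hadd hsum (neg_mem hδ)
          have hvN : v ∈ N :=
            (LieSubmodule.mem_toSubmodule N).mp (ExpAdAux.Fmod_le_N hadd hsum hN j hv)
          refine ⟨u + v, N.add_mem hu hvN, ?_⟩
          have hsub : u + v - u ∈ ExpAdAux.Fmod H P j := by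
            rw [add_sub_cancel_left]; exact hv
          have hd := ExpAdAux.expN_diff hadd hsum hN (N.add_mem hu hvN) hu hsub h
          have hvh : ⁅u + v - u, (h : L)⁆
              = ((h : L) + n) - expNilpotent (LieAlgebra.ad K L u) (h : L) := by
            rw [add_sub_cancel_left, ← lie_skew, hve, neg_neg]
          have hrw : ((h : L) + n) - expNilpotent (LieAlgebra.ad K L (u + v)) (h : L)
              = -(expNilpotent (LieAlgebra.ad K L (u + v)) (h : L)
                  - expNilpotent (LieAlgebra.ad K L u) (h : L) - ⁅u + v - u, (h : L)⁆) := by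
            rw [hvh]; abel
          rw [hrw]
          exact neg_mem hd
      obtain ⟨u, hu, hmem⟩ := claim Mb
      rw [hFbot] at hmem
      exact ⟨u, hu, h, hh, (sub_eq_zero.mp ((Submodule.mem_bot K).mp hmem)).symm⟩
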